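/- For n ≥ 3, the DFA A^{-d} obtained from the automaton A by removing symbol d (keeping symbols a,b,c,e) has shortest synchronizing word length exactly n^2 - 3n + 3; in particular the word b(a^{n-2}c)^{n-2} of length n^2 - 3n + 3 is synchronizing for A^{-d}. -/

import Mathlib

/-- `w` is a synchronizing word for the DFA with transition function `δ`. -/
def IsSyncWord {n k : ℕ} (δ : Fin k → Fin n → Fin n) (w : List (Fin k)) : Prop :=
  ∃ qs : Fin n, ∀ q : Fin n, w.foldl (fun s x => δ x s) q = qs

/-- The DFA is basic: distinct symbols act differently and no symbol is the identity. -/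
def IsBasic {n k : ℕ} (δ : Fin k → Fin n → Fin n) : Prop :=
  Function.Injective δ ∧ ∀ x : Fin k, δ x ≠ id

/-- Length of a shortest synchronizing word of the DFA `δ`. -/
noncomputable def shortestSync {n k : ℕ} (δ : Fin k → Fin n → Fin n) : ℕ :=
  sInf {L | ∃ w : List (Fin k), IsSyncWord δ w ∧ w.length = L}

/-- `d(n,k)`: the maximal shortest synchronizing word length over all synchronizing
basic DFAs with `n` states and `k` symbols. -/
noncomputable def dBound (n k : ℕ) : ℕ :=
  sSup {L | ∃ δ : Fin k → Fin n → Fin n,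
    IsBasic δ ∧ (∃ w, IsSyncWord δ w) ∧ shortestSync δ = L}

/- The symbols of the automaton `A`, on `Fin n` (state `i+1` of `{1,...,n}` is index `i`,
and `n+1` is interpreted as `1`, i.e. addition is cyclic). -/
def mapA (n : ℕ) [NeZero n] : Fin n → Fin n := fun q => q + 1
def mapB (n : ℕ) [NeZero n] : Fin n → Fin n := fun q =>
  if q = 0 then 0 else if q = 1 then 2 else if q = 2 then 2 else q
def mapC (n : ℕ) [NeZero n] : Fin n → Fin n := fun q =>
  if q = 0 then 2 else if q = 1 then 2 else q + 1
def mapE (n : ℕ) [NeZero n] : Fin n → Fin n := fun q =>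
  if q = 0 then 2 else if q = 1 then 3 else if q = 2 then 3 else q + 1


/-- The DFA `A^{-d}` with the four symbols `a, b, c, e`. -/
def deltaAd (n : ℕ) [NeZero n] : Fin 4 → Fin n → Fin n :=
  ![mapA n, mapB n, mapC n, mapE n]

namespace AminusdProof

variable {n : ℕ} [NeZero n]

open Fin.NatCast Fin.CommRing

/-- cyclic interval of length `m` starting at `s` -/
def intv (s : Fin n) (m : ℕ) : Finset (Fin n) :=
  (Finset.range m).image fun i : ℕ => s + (i : Fin n)

def rr (s : Fin n) : ℕ := if 2 ≤ s.val then s.val - 2 else s.val + n - 2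

def phiI (s : Fin n) (m : ℕ) : ℤ := ((n : ℤ) - 1) * ((m : ℤ) - 1) - rr s

def LL (n : ℕ) : ℤ := ((n : ℤ) - 1) * ((n : ℤ) - 2) + 1

def good (S : Finset (Fin n)) : Finset (Fin n × Fin n) :=
  Finset.univ.filter fun p => p.2.val + 1 ≤ n - 1 ∧ S ⊆ intv p.1 (p.2.val + 1)

noncomputable def phi (S : Finset (Fin n)) : ℤ :=
  if h : (good S).Nonempty then (good S).inf' h (fun p => phiI p.1 (p.2.val + 1)) else LL n

lemma val0 : (0 : Fin n).val = 0 := rfl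

lemma val1 (h : 1 < n) : (1 : Fin n).val = 1 := by
  rw [Fin.val_one']; exact Nat.mod_eq_of_lt h

lemma val2 (h : 2 < n) : (2 : Fin n).val = 2 := by
  have h2 : (2 : Fin n).val = 2 % n := by simp [OfNat.ofNat, Fin.instOfNat]
  rw [h2]; exact Nat.mod_eq_of_lt h

lemma val3 (h : 3 < n) : (3 : Fin n).val = 3 := by
  have h2 : (3 : Fin n).val = 3 % n := by simp [OfNat.ofNat, Fin.instOfNat]
  rw [h2]; exact Nat.mod_eq_of_lt h

lemma sub_val (a b : Fin n) :
    (a - b).val = if b.val ≤ a.val then a.val - b.val else a.val + n - b.val := by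
  rw [Fin.sub_def]
  have ha := a.isLt; have hb := b.isLt
  simp only []
  rcases le_or_gt b.val a.val with h | h
  · rw [if_pos h]
    have : n - b.val + a.val = (a.val - b.val) + n := by omega
    rw [this, Nat.add_mod_right, Nat.mod_eq_of_lt (by omega)]
  · rw [if_neg (by omega)]
    rw [Nat.mod_eq_of_lt (by omega)]
    omega

lemma mem_intv {m : ℕ} (hm : m ≤ n) {q s : Fin n} : q ∈ intv s m ↔ (q - s).val < m := by
  simp only [intv, Finset.mem_image, Finset.mem_range]
  constructor
  · rintro ⟨i, hi, rfl⟩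
    have : (s + (i : Fin n)) - s = (i : Fin n) := by ring
    rw [this, Fin.val_cast_of_lt (by omega)]
    exact hi
  · intro h
    refine ⟨(q - s).val, h, ?_⟩
    rw [Fin.cast_val_eq_self]
    ring

lemma add_one_val (h : 1 < n) (q : Fin n) :
    (q + 1).val = if q.val = n - 1 then 0 else q.val + 1 := by
  have h1 : (q + 1).val = (q.val + (1 : Fin n).val) % n := by rw [Fin.add_def]
  rw [h1, val1 h]
  have := q.isLt
  rcases eq_or_ne q.val (n - 1) with h' | h'
  · rw [if_pos h', h']
    have h2 : n - 1 + 1 = n := by omega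
    rw [h2, Nat.mod_self]
  · rw [if_neg h', Nat.mod_eq_of_lt (by omega)]

lemma mapA_val (h : 1 < n) (q : Fin n) :
    (mapA n q).val = if q.val = n - 1 then 0 else q.val + 1 := add_one_val h q

lemma mapB_val (h : 3 ≤ n) (q : Fin n) :
    (mapB n q).val = if q.val = 1 ∨ q.val = 2 then 2 else q.val := by
  have hv1 := val1 (show 1 < n by omega)
  have hv2 := val2 (show 2 < n by omega)
  simp only [mapB, apply_ite Fin.val, Fin.ext_iff, val0, hv1, hv2]
  split_ifs <;> omega

lemma mapC_val (h : 3 ≤ n) (q : Fin n) :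
    (mapC n q).val = if q.val ≤ 1 then 2 else if q.val = n - 1 then 0 else q.val + 1 := by
  have hv1 := val1 (show 1 < n by omega)
  have hv2 := val2 (show 2 < n by omega)
  simp only [mapC, apply_ite Fin.val, Fin.ext_iff, val0, hv1, hv2,
    add_one_val (show 1 < n by omega)]
  split_ifs <;> omega

lemma mapE_val (h : 4 ≤ n) (q : Fin n) :
    (mapE n q).val = if q.val = 0 then 2 else if q.val ≤ 2 then 3
      else if q.val = n - 1 then 0 else q.val + 1 := by
  have hv1 := val1 (show 1 < n by omega)
  have hv2 := val2 (show 2 < n by omega)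
  have hv3 := val3 (show 3 < n by omega)
  simp only [mapE, apply_ite Fin.val, Fin.ext_iff, val0, hv1, hv2, hv3,
    add_one_val (show 1 < n by omega)]
  split_ifs <;> omega

lemma card_intv_le (s : Fin n) (m : ℕ) : (intv s m).card ≤ m :=
  le_trans Finset.card_image_le (by simp)

lemma phiI_le (hn : 1 ≤ n) {s : Fin n} {m : ℕ} (hm : m ≤ n - 1) : phiI s m ≤ LL n - 1 := by
  unfold phiI LL
  have h0 : (0 : ℤ) ≤ (rr s : ℤ) := Int.ofNat_nonneg _
  have hmul : ((n : ℤ) - 1) * ((m : ℤ) - 1) ≤ ((n : ℤ) - 1) * ((n : ℤ) - 2) := by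
    apply mul_le_mul_of_nonneg_left (by omega) (by omega)
  linarith

lemma phi_le {S : Finset (Fin n)} {s : Fin n} {m : ℕ} (hm1 : 1 ≤ m) (hm2 : m ≤ n - 1)
    (hsub : S ⊆ intv s m) : phi S ≤ phiI s m := by
  have hn0 : 0 < n := Nat.pos_of_ne_zero (NeZero.ne n)
  have hlt : m - 1 < n := by omega
  have hm' : m - 1 + 1 = m := by omega
  have hp : (s, (⟨m - 1, hlt⟩ : Fin n)) ∈ good S := by
    simp only [good, Finset.mem_filter, Finset.mem_univ, true_and]
    rw [hm']
    exact ⟨hm2, hsub⟩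
  have hne : (good S).Nonempty := ⟨_, hp⟩
  rw [phi, dif_pos hne]
  calc (good S).inf' hne (fun p => phiI p.1 (p.2.val + 1))
      ≤ phiI s ((⟨m - 1, hlt⟩ : Fin n).val + 1) := Finset.inf'_le _ hp
    _ = phiI s m := by rw [show (⟨m - 1, hlt⟩ : Fin n).val = m - 1 from rfl, hm']

lemma mem_intv_compl (hn : 2 ≤ n) {q q' : Fin n} (hne : q' ≠ q) : q' ∈ intv (q + 1) (n - 1) := by
  rw [mem_intv (by omega)]
  have hv : q'.val ≠ q.val := fun hc => hne (Fin.ext hc)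
  have h1 := q.isLt; have h2 := q'.isLt
  rw [sub_val, add_one_val (show 1 < n by omega)]
  split_ifs <;> omega

lemma phi_le_LL (hn : 2 ≤ n) {S : Finset (Fin n)} (hS : S ≠ Finset.univ) :
    phi S ≤ LL n - 1 := by
  obtain ⟨q, hq⟩ : ∃ q, q ∉ S := by
    by_contra hcon
    push_neg at hcon
    exact hS (Finset.eq_univ_iff_forall.2 hcon)
  have hsub : S ⊆ intv (q + 1) (n - 1) :=
    fun q' hq' => mem_intv_compl hn (fun hc => hq (hc ▸ hq'))
  exact le_trans (phi_le (by omega) le_rfl hsub) (phiI_le (by omega) le_rfl)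

lemma phi_univ : phi (Finset.univ : Finset (Fin n)) = LL n := by
  have hn0 : 0 < n := Nat.pos_of_ne_zero (NeZero.ne n)
  rw [phi, dif_neg]
  rintro ⟨p, hp⟩
  simp only [good, Finset.mem_filter, Finset.mem_univ, true_and] at hp
  have h1 := Finset.card_le_card hp.2
  have h2 := card_intv_le p.1 (p.2.val + 1)
  rw [Finset.card_univ, Fintype.card_fin] at h1
  omega

lemma phi_singleton (hn : 2 ≤ n) (q : Fin n) : phi {q} ≤ 0 := by
  have h1 : ({q} : Finset (Fin n)) ⊆ intv q 1 := by
    intro q' hq'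
    rw [Finset.mem_singleton] at hq'
    subst hq'
    rw [mem_intv (by omega), sub_self]
    simp [val0]
  refine le_trans (phi_le le_rfl (by omega) h1) ?_
  unfold phiI
  have h0 : (0 : ℤ) ≤ (rr q : ℤ) := Int.ofNat_nonneg _
  push_cast
  linarith

lemma add_val (a b : Fin n) :
    (a + b).val = if a.val + b.val < n then a.val + b.val else a.val + b.val - n := by
  have h1 : (a + b).val = (a.val + b.val) % n := by rw [Fin.add_def]
  have ha := a.isLt; have hb := b.isLt
  rw [h1]
  split_ifs with h
  · exact Nat.mod_eq_of_lt h
  · rw [Nat.mod_eq_sub_mod (by omega), Nat.mod_eq_of_lt (by omega)]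

lemma sub_one_val (h : 1 < n) (s : Fin n) :
    (s - 1).val = if s.val = 0 then n - 1 else s.val - 1 := by
  have := s.isLt
  rw [sub_val, val1 h]
  split_ifs <;> omega

lemma rr_sub_one (h : 2 ≤ n) (s : Fin n) : rr s ≤ rr (s - 1) + 1 := by
  have := s.isLt
  unfold rr
  rw [sub_one_val (by omega)]
  split_ifs <;> omega

lemma rr_two (h : 2 < n) : rr (2 : Fin n) = 0 := by
  unfold rr; rw [val2 h]; split_ifs <;> omega

lemma rr_lt (h : 1 ≤ n) (s : Fin n) : rr s < n := by
  have := s.isLt; unfold rr; split_ifs <;> omega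

lemma phiI_same {s' s : Fin n} (m : ℕ) (h : rr s ≤ rr s' + 1) : phiI s' m ≤ phiI s m + 1 := by
  unfold phiI
  have : (rr s : ℤ) ≤ (rr s' : ℤ) + 1 := by exact_mod_cast h
  linarith

lemma phiI_step {s' s : Fin n} (m : ℕ) (h : n - 1 + rr s ≤ rr s' + 1) :
    phiI s' (m + 1) ≤ phiI s m + 1 := by
  unfold phiI
  have h' : (n : ℤ) - 1 + (rr s : ℤ) ≤ (rr s' : ℤ) + 1 := by
    have h1 : ((n - 1 + rr s : ℕ) : ℤ) ≤ ((rr s' + 1 : ℕ) : ℤ) := by exact_mod_cast h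
    push_cast at h1
    omega
  have e : ((n : ℤ) - 1) * (((m : ℕ) + 1 : ℤ) - 1) =
      ((n : ℤ) - 1) * ((m : ℤ) - 1) + ((n : ℤ) - 1) := by ring
  push_cast
  push_cast at e
  linarith [e]

lemma phiI_full (h : 2 < n) {s : Fin n} (hs : s.val = 2) : phiI s (n - 1) = LL n - 1 := by
  unfold phiI LL rr
  rw [hs]
  rw [if_pos (by omega)]
  have e1 : ((n - 1 : ℕ) : ℤ) = (n : ℤ) - 1 := by omega
  rw [e1]
  push_cast
  ring

/-- uniform "one-step backward" statement for a letter `f`. -/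
def Step (f : Fin n → Fin n) (s : Fin n) (m : ℕ) : Prop :=
  (∃ s' m', 1 ≤ m' ∧ m' ≤ n - 1 ∧ (∀ q, f q ∈ intv s m → q ∈ intv s' m') ∧
    phiI s' m' ≤ phiI s m + 1) ∨ LL n - 1 ≤ phiI s m

lemma stepA (hn : 4 ≤ n) (s : Fin n) {m : ℕ} (hm1 : 1 ≤ m) (hm2 : m ≤ n - 1) :
    Step (mapA n) s m := by
  have hsl := s.isLt
  left
  refine ⟨s - 1, m, hm1, hm2, ?_, phiI_same m (rr_sub_one (by omega) s)⟩
  intro q hq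
  have hql := q.isLt
  rw [mem_intv (by omega)] at hq ⊢
  rw [sub_val, mapA_val (by omega)] at hq
  rw [sub_val, sub_one_val (by omega)]
  split_ifs at hq ⊢ <;> omega

lemma stepB (hn : 4 ≤ n) (s : Fin n) {m : ℕ} (hm1 : 1 ≤ m) (hm2 : m ≤ n - 1) :
    Step (mapB n) s m := by
  have hsl := s.isLt
  by_cases hb : (2 : Fin n) ∈ intv s m ∧ (1 : Fin n) ∉ intv s m
  · obtain ⟨h2, h1⟩ := hb
    rw [mem_intv (by omega)] at h2 h1
    rw [sub_val, val2 (by omega)] at h2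
    rw [sub_val, val1 (by omega)] at h1
    have hs2 : s.val = 2 := by split_ifs at h2 h1 <;> omega
    rcases eq_or_lt_of_le hm2 with heq | hlt
    · right
      rw [heq, phiI_full (by omega) hs2]
    · left
      refine ⟨1, m + 1, by omega, by omega, ?_, ?_⟩
      · intro q hq
        have hql := q.isLt
        rw [mem_intv (by omega)] at hq ⊢
        rw [sub_val, mapB_val (by omega)] at hq
        rw [sub_val, val1 (by omega)]
        split_ifs at hq ⊢ <;> omega
      · apply phiI_step
        have e1 : rr (1 : Fin n) = n - 1 := by
          unfold rr; rw [val1 (by omega), if_neg (by omega)]; omega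
        have e2 : rr s = 0 := by unfold rr; rw [hs2]; split_ifs <;> omega
        omega
  · left
    refine ⟨s, m, hm1, hm2, ?_, phiI_same m (by omega)⟩
    push_neg at hb
    intro q hq
    rcases eq_or_ne q 1 with rfl | hq1
    · have e : mapB n (1 : Fin n) = 2 := by
        unfold mapB
        rw [if_neg, if_pos rfl]
        intro hc
        have := congrArg Fin.val hc
        rw [val1 (by omega), val0] at this
        omega
      rw [e] at hq
      exact hb hq
    · have hql := q.isLt
      have hqv : q.val ≠ 1 := fun hc => hq1 (Fin.ext (by rw [hc, val1 (by omega)]))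
      rw [mem_intv (by omega)] at hq ⊢
      rw [sub_val, mapB_val (by omega)] at hq
      rw [sub_val]
      split_ifs at hq ⊢ <;> omega

lemma stepC (hn : 4 ≤ n) (s : Fin n) {m : ℕ} (hm1 : 1 ≤ m) (hm2 : m ≤ n - 1) :
    Step (mapC n) s m := by
  have hsl := s.isLt
  by_cases hs2 : s.val = 2
  · rcases eq_or_lt_of_le hm2 with heq | hlt
    · right
      rw [heq, phiI_full (by omega) hs2]
    · left
      refine ⟨0, m + 1, by omega, by omega, ?_, ?_⟩
      · intro q hq
        have hql := q.isLt
        rw [mem_intv (by omega)] at hq ⊢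
        rw [sub_val, mapC_val (by omega)] at hq
        rw [sub_val, val0]
        split_ifs at hq ⊢ <;> omega
      · apply phiI_step
        have e1 : rr (0 : Fin n) = n - 2 := by
          unfold rr; rw [val0, if_neg (by omega)]; omega
        have e2 : rr s = 0 := by unfold rr; rw [hs2]; split_ifs <;> omega
        omega
  · left
    refine ⟨s - 1, m, hm1, hm2, ?_, phiI_same m (rr_sub_one (by omega) s)⟩
    intro q hq
    have hql := q.isLt
    rw [mem_intv (by omega)] at hq ⊢
    rw [sub_val, mapC_val (by omega)] at hq
    rw [sub_val, sub_one_val (by omega)]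
    split_ifs at hq ⊢ <;> omega

lemma stepE (hn : 4 ≤ n) (s : Fin n) {m : ℕ} (hm1 : 1 ≤ m) (hm2 : m ≤ n - 1) :
    Step (mapE n) s m := by
  have hsl := s.isLt
  by_cases hs2 : s.val = 2
  · rcases eq_or_lt_of_le hm2 with heq | hlt
    · right
      rw [heq, phiI_full (by omega) hs2]
    · left
      refine ⟨0, m + 1, by omega, by omega, ?_, ?_⟩
      · intro q hq
        have hql := q.isLt
        rw [mem_intv (by omega)] at hq ⊢
        rw [sub_val, mapE_val (by omega)] at hq
        rw [sub_val, val0]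
        split_ifs at hq ⊢ <;> omega
      · apply phiI_step
        have e1 : rr (0 : Fin n) = n - 2 := by
          unfold rr; rw [val0, if_neg (by omega)]; omega
        have e2 : rr s = 0 := by unfold rr; rw [hs2]; split_ifs <;> omega
        omega
  · by_cases hs3 : s.val = 3
    · have e3 : rr s = 1 := by unfold rr; rw [hs3, if_pos (by omega)]
      have e1 : rr (1 : Fin n) = n - 1 := by
        unfold rr; rw [val1 (by omega), if_neg (by omega)]; omega
      rcases eq_or_lt_of_le hm2 with heq | hlt
      · left
        refine ⟨1, m, hm1, hm2, ?_, phiI_same m (by omega)⟩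
        intro q hq
        have hql := q.isLt
        rw [mem_intv (by omega)] at hq ⊢
        rw [sub_val, mapE_val (by omega)] at hq
        rw [sub_val, val1 (by omega)]
        split_ifs at hq ⊢ <;> omega
      · left
        refine ⟨1, m + 1, by omega, by omega, ?_, ?_⟩
        · intro q hq
          have hql := q.isLt
          rw [mem_intv (by omega)] at hq ⊢
          rw [sub_val, mapE_val (by omega)] at hq
          rw [sub_val, val1 (by omega)]
          split_ifs at hq ⊢ <;> omega
        · apply phiI_step
          omega
    · left
      refine ⟨s - 1, m, hm1, hm2, ?_, phiI_same m (rr_sub_one (by omega) s)⟩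
      intro q hq
      have hql := q.isLt
      rw [mem_intv (by omega)] at hq ⊢
      rw [sub_val, mapE_val (by omega)] at hq
      rw [sub_val, sub_one_val (by omega)]
      split_ifs at hq ⊢ <;> omega

lemma good_nonempty (hn : 2 ≤ n) {S : Finset (Fin n)} (hS : S ≠ Finset.univ) :
    (good S).Nonempty := by
  obtain ⟨q, hq⟩ : ∃ q, q ∉ S := by
    by_contra hcon
    push_neg at hcon
    exact hS (Finset.eq_univ_iff_forall.2 hcon)
  have hlt : n - 2 < n := by omega
  refine ⟨(q + 1, ⟨n - 2, hlt⟩), ?_⟩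
  simp only [good, Finset.mem_filter, Finset.mem_univ, true_and]
  constructor
  · show n - 2 + 1 ≤ n - 1
    omega
  · show S ⊆ intv (q + 1) (n - 2 + 1)
    rw [show n - 2 + 1 = n - 1 by omega]
    exact fun q' hq' => mem_intv_compl hn (fun hc => hq (hc ▸ hq'))

lemma neg_one_val (h : 1 < n) (s : Fin n) : (s - 1 - s).val = n - 1 := by
  have := s.isLt
  rw [sub_val, sub_one_val h]
  split_ifs <;> omega

lemma univ_sub_lemma (hn : 4 ≤ n) (f : Fin n → Fin n)
    (h1 : ∀ t : Fin n, t ≠ 1 → ∃ q, f q = t) :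
    LL n - 1 ≤ phi (Finset.univ.image f) := by
  rw [phi]
  split_ifs with h
  · apply Finset.le_inf'
    intro p hp
    simp only [good, Finset.mem_filter, Finset.mem_univ, true_and] at hp
    obtain ⟨hm, hsub⟩ := hp
    set s := p.1
    set m := p.2.val + 1 with hmdef
    have hsl := s.isLt
    have hsubT : ∀ t : Fin n, t ≠ 1 → t ∈ intv s m := by
      intro t ht
      obtain ⟨q, hq⟩ := h1 t ht
      exact hsub (hq ▸ Finset.mem_image_of_mem f (Finset.mem_univ q))
    have hs2 : s.val = 2 := by
      by_contra hcon
      have hne : s - 1 ≠ 1 := by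
        intro hc
        have := congrArg Fin.val hc
        rw [sub_one_val (by omega), val1 (by omega)] at this
        split_ifs at this <;> omega
      have := hsubT (s - 1) hne
      rw [mem_intv (by omega)] at this
      rw [neg_one_val (by omega)] at this
      omega
    have h0 : (0 : Fin n) ≠ 1 := by
      intro hc
      have := congrArg Fin.val hc
      rw [val0, val1 (by omega)] at this
      omega
    have hmem0 := hsubT 0 h0
    rw [mem_intv (by omega), sub_val, val0] at hmem0
    rw [if_neg (by omega)] at hmem0
    have hmn : m = n - 1 := by omega
    rw [hmn, phiI_full (by omega) hs2]
  · unfold LL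
    linarith

lemma exists_mapB (hn : 4 ≤ n) (t : Fin n) (ht : t ≠ 1) : ∃ q, mapB n q = t := by
  have htl := t.isLt
  have htv : t.val ≠ 1 := fun hc => ht (Fin.ext (by rw [hc, val1 (by omega)]))
  rcases eq_or_ne t.val 2 with h2 | h2
  · refine ⟨2, Fin.ext ?_⟩
    rw [mapB_val (by omega), val2 (by omega)]
    split_ifs <;> omega
  · refine ⟨t, Fin.ext ?_⟩
    rw [mapB_val (by omega)]
    split_ifs <;> omega

lemma exists_mapC (hn : 4 ≤ n) (t : Fin n) (ht : t ≠ 1) : ∃ q, mapC n q = t := by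
  have htl := t.isLt
  have htv : t.val ≠ 1 := fun hc => ht (Fin.ext (by rw [hc, val1 (by omega)]))
  rcases eq_or_ne t.val 2 with h2 | h2
  · refine ⟨0, Fin.ext ?_⟩
    rw [mapC_val (by omega), val0]
    split_ifs <;> omega
  · rcases eq_or_ne t.val 0 with h0 | h0
    · refine ⟨⟨n - 1, by omega⟩, Fin.ext ?_⟩
      rw [mapC_val (by omega)]
      simp only [Fin.val_mk]
      split_ifs <;> omega
    · refine ⟨⟨t.val - 1, by omega⟩, Fin.ext ?_⟩
      rw [mapC_val (by omega)]
      simp only [Fin.val_mk]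
      split_ifs <;> omega

lemma exists_mapE (hn : 4 ≤ n) (t : Fin n) (ht : t ≠ 1) : ∃ q, mapE n q = t := by
  have htl := t.isLt
  have htv : t.val ≠ 1 := fun hc => ht (Fin.ext (by rw [hc, val1 (by omega)]))
  rcases eq_or_ne t.val 2 with h2 | h2
  · refine ⟨0, Fin.ext ?_⟩
    rw [mapE_val (by omega), val0]
    split_ifs <;> omega
  · rcases eq_or_ne t.val 3 with h3 | h3
    · refine ⟨⟨1, by omega⟩, Fin.ext ?_⟩
      rw [mapE_val (by omega)]
      simp only [Fin.val_mk]
      split_ifs <;> first | contradiction | omega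
    · rcases eq_or_ne t.val 0 with h0 | h0
      · refine ⟨⟨n - 1, by omega⟩, Fin.ext ?_⟩
        rw [mapE_val (by omega)]
        simp only [Fin.val_mk]
        split_ifs <;> omega
      · refine ⟨⟨t.val - 1, by omega⟩, Fin.ext ?_⟩
        rw [mapE_val (by omega)]
        simp only [Fin.val_mk]
        split_ifs <;> omega

lemma image_mapA : (Finset.univ : Finset (Fin n)).image (mapA n) = Finset.univ := by
  apply Finset.eq_univ_iff_forall.2
  intro t
  refine Finset.mem_image.2 ⟨t - 1, Finset.mem_univ _, ?_⟩
  show (t - 1) + 1 = t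
  ring

lemma step_phi (hn : 4 ≤ n) (f : Fin n → Fin n)
    (hstep : ∀ (s : Fin n) (m : ℕ), 1 ≤ m → m ≤ n - 1 → Step f s m)
    (huniv : LL n - 1 ≤ phi (Finset.univ.image f))
    (S : Finset (Fin n)) :
    phi S ≤ phi (S.image f) + 1 := by
  by_cases hS : S = Finset.univ
  · subst hS
    rw [phi_univ]
    linarith
  · by_cases hgt : (good (S.image f)).Nonempty
    · obtain ⟨p, hp, hval⟩ := Finset.exists_mem_eq_inf' hgt (fun p => phiI p.1 (p.2.val + 1))
      have hphiT : phi (S.image f) = phiI p.1 (p.2.val + 1) := by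
        rw [phi, dif_pos hgt, hval]
      have hp' := hp
      simp only [good, Finset.mem_filter, Finset.mem_univ, true_and] at hp'
      rcases hstep p.1 (p.2.val + 1) (by omega) hp'.1 with ⟨s', m', h1, h2, himp, hle⟩ | hfb
      · have hsub : S ⊆ intv s' m' := fun q hq =>
          himp q (hp'.2 (Finset.mem_image_of_mem f hq))
        calc phi S ≤ phiI s' m' := phi_le h1 h2 hsub
          _ ≤ phiI p.1 (p.2.val + 1) + 1 := hle
          _ = phi (S.image f) + 1 := by rw [hphiT]
      · calc phi S ≤ LL n - 1 := phi_le_LL (by omega) hS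
          _ ≤ phiI p.1 (p.2.val + 1) := hfb
          _ ≤ phi (S.image f) + 1 := by rw [hphiT]; linarith
    · have hT : phi (S.image f) = LL n := by rw [phi, dif_neg hgt]
      calc phi S ≤ LL n - 1 := phi_le_LL (by omega) hS
        _ ≤ phi (S.image f) + 1 := by rw [hT]; linarith

lemma step_phi_all (hn : 4 ≤ n) (x : Fin 4) (S : Finset (Fin n)) :
    phi S ≤ phi (S.image (deltaAd n x)) + 1 := by
  fin_cases x
  · exact step_phi hn (mapA n) (fun s m h1 h2 => stepA hn s h1 h2)
      (by rw [image_mapA, phi_univ]; linarith) S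
  · exact step_phi hn (mapB n) (fun s m h1 h2 => stepB hn s h1 h2)
      (univ_sub_lemma hn _ (exists_mapB hn)) S
  · exact step_phi hn (mapC n) (fun s m h1 h2 => stepC hn s h1 h2)
      (univ_sub_lemma hn _ (exists_mapC hn)) S
  · exact step_phi hn (mapE n) (fun s m h1 h2 => stepE hn s h1 h2)
      (univ_sub_lemma hn _ (exists_mapE hn)) S

lemma lb_aux (hn : 4 ≤ n) (w : List (Fin 4)) :
    LL n - w.length ≤ phi (Finset.univ.image fun q : Fin n =>
      w.foldl (fun s x => deltaAd n x s) q) := by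
  induction w using List.reverseRecOn with
  | nil =>
      simp only [List.foldl_nil, List.length_nil, Nat.cast_zero, sub_zero]
      rw [show (Finset.univ.image fun q : Fin n => q) = Finset.univ from
        Finset.image_id, phi_univ]
  | append_singleton ys x ih =>
      have himg : (Finset.univ.image fun q : Fin n =>
          (ys ++ [x]).foldl (fun s x => deltaAd n x s) q) =
          (Finset.univ.image fun q : Fin n =>
            ys.foldl (fun s x => deltaAd n x s) q).image (deltaAd n x) := by
        rw [Finset.image_image]
        apply Finset.image_congr
        intro q _
        simp [List.foldl_append]
      rw [himg]
      have hstep := step_phi_all hn x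
        (Finset.univ.image fun q : Fin n => ys.foldl (fun s x => deltaAd n x s) q)
      have hlen : ((ys ++ [x]).length : ℤ) = (ys.length : ℤ) + 1 := by
        simp
      rw [hlen]
      linarith

lemma lower_bound (hn : 4 ≤ n) (w : List (Fin 4)) (hw : IsSyncWord (deltaAd n) w) :
    n ^ 2 - 3 * n + 3 ≤ w.length := by
  obtain ⟨qs, hqs⟩ := hw
  have himg : (Finset.univ.image fun q : Fin n =>
      w.foldl (fun s x => deltaAd n x s) q) = {qs} := by
    ext t
    simp only [Finset.mem_image, Finset.mem_univ, true_and, Finset.mem_singleton]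
    constructor
    · rintro ⟨q, rfl⟩
      exact hqs q
    · intro h
      exact ⟨0, by rw [hqs 0, h]⟩
  have h1 := lb_aux hn w
  rw [himg] at h1
  have h2 := phi_singleton (by omega) qs
  have h3 : LL n ≤ (w.length : ℤ) := by linarith
  unfold LL at h3
  have hsq : n ^ 2 = n * n := sq n
  have h6 : ((n : ℤ) - 1) * ((n : ℤ) - 2) + 1 = (n : ℤ) * n - 3 * (n : ℤ) + 3 := by ring
  have h3' : (n : ℤ) * n - 3 * (n : ℤ) + 3 ≤ (w.length : ℤ) := by linarith
  have h4 : 3 * n ≤ n * n := Nat.mul_le_mul_right n (by omega)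
  have h9 : ((n * n - 3 * n + 3 : ℕ) : ℤ) = (n : ℤ) * n - 3 * (n : ℤ) + 3 := by
    push_cast [Nat.cast_sub h4]
    ring
  have h10 : ((n * n - 3 * n + 3 : ℕ) : ℤ) ≤ (w.length : ℤ) := by rw [h9]; exact h3'
  rw [hsq]
  exact_mod_cast h10

lemma lower_bound3 (w : List (Fin 4)) (hw : IsSyncWord (deltaAd 3) w) : 3 ≤ w.length := by
  by_contra hcon
  push_neg at hcon
  rcases w with _ | ⟨x, _ | ⟨y, _ | ⟨z, rest⟩⟩⟩
  · have : ¬ ∃ qs : Fin 3, ∀ q : Fin 3,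
        ([] : List (Fin 4)).foldl (fun s x => deltaAd 3 x s) q = qs := by decide
    exact this hw
  · have : ∀ x : Fin 4, ¬ ∃ qs : Fin 3, ∀ q : Fin 3,
        [x].foldl (fun s x => deltaAd 3 x s) q = qs := by decide
    exact this x hw
  · have : ∀ x y : Fin 4, ¬ ∃ qs : Fin 3, ∀ q : Fin 3,
        [x, y].foldl (fun s x => deltaAd 3 x s) q = qs := by decide
    exact this x y hw
  · simp at hcon
    omega

lemma foldA (k : ℕ) (q : Fin n) :
    (List.replicate k (0 : Fin 4)).foldl (fun s x => deltaAd n x s) q = q + (k : Fin n) := by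
  induction k generalizing q with
  | zero => simp
  | succ k ih =>
      rw [List.replicate_succ, List.foldl_cons]
      rw [show deltaAd n 0 q = q + 1 from rfl]
      rw [ih]
      push_cast
      ring

lemma rounds (hn : 3 ≤ n) (j : ℕ) : ∀ (m : ℕ), j + 1 ≤ m → m ≤ n - 1 →
    ∀ q : Fin n, q ∈ intv 2 m →
    (List.replicate j (List.replicate (n - 2) (0 : Fin 4) ++ [2])).flatten.foldl
      (fun s x => deltaAd n x s) q ∈ intv 2 (m - j) := by
  induction j with
  | zero => intro m _ _ q hq; simpa using hq
  | succ j ih =>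
      intro m hm1 hm2 q hq
      rw [List.replicate_succ, List.flatten_cons, List.foldl_append, List.foldl_append,
        foldA]
      rw [show ∀ p : Fin n, List.foldl (fun s x => deltaAd n x s) p [(2 : Fin 4)] = mapC n p
        from fun p => rfl]
      have hstep : mapC n (q + ((n - 2 : ℕ) : Fin n)) ∈ intv 2 (m - 1) := by
        have hql := q.isLt
        rw [mem_intv (by omega)] at hq ⊢
        rw [sub_val, val2 (by omega)] at hq
        rw [sub_val, val2 (by omega), mapC_val (by omega), add_val,
          Fin.val_cast_of_lt (show n - 2 < n by omega)]
        split_ifs at hq ⊢ <;> omega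
      have hres := ih (m - 1) (by omega) (by omega) _ hstep
      rw [show m - 1 - j = m - (j + 1) by omega] at hres
      exact hres

lemma sync_word (hn : 3 ≤ n) (q : Fin n) :
    (1 :: (List.replicate (n - 2) (List.replicate (n - 2) (0 : Fin 4) ++ [2])).flatten).foldl
      (fun s x => deltaAd n x s) q = 2 := by
  rw [List.foldl_cons]
  rw [show deltaAd n 1 q = mapB n q from rfl]
  have h1 : mapB n q ∈ intv 2 (n - 1) := by
    have hql := q.isLt
    rw [mem_intv (by omega), sub_val, val2 (by omega), mapB_val (by omega)]
    split_ifs <;> omega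
  have h2 := rounds hn (n - 2) (n - 1) (by omega) (by omega) _ h1
  rw [show n - 1 - (n - 2) = 1 by omega] at h2
  set p := (List.replicate (n - 2) (List.replicate (n - 2) (0 : Fin 4) ++ [2])).flatten.foldl
      (fun s x => deltaAd n x s) (mapB n q) with hp
  have hpl := p.isLt
  rw [mem_intv (by omega), sub_val, val2 (by omega)] at h2
  apply Fin.ext
  rw [val2 (by omega)]
  split_ifs at h2 <;> omega

lemma word_len (hn : 3 ≤ n) :
    (1 :: (List.replicate (n - 2) (List.replicate (n - 2) (0 : Fin 4) ++ [2])).flatten).length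
      = n ^ 2 - 3 * n + 3 := by
  rw [List.length_cons, List.length_flatten]
  simp only [List.map_replicate, List.sum_replicate, smul_eq_mul, List.length_append,
    List.length_replicate, List.length_cons, List.length_nil]
  obtain ⟨k, rfl⟩ : ∃ k, n = k + 3 := ⟨n - 3, by omega⟩
  have e : (k + 3) ^ 2 = k * k + 6 * k + 9 := by ring
  have e2 : (k + 1) * (k + 1 + 1) = k * k + 3 * k + 2 := by ring
  rw [e, show k + 3 - 2 = k + 1 by omega, e2]
  omega

end AminusdProof

/-- for n ≥ 3, `A^{-d}` has shortest synchronizing word length exactly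
`n² - 3n + 3`; in particular `b(a^{n-2}c)^{n-2}`, of that length, is synchronizing. -/
theorem shortestSync_Aminusd (n : ℕ) (hn : 3 ≤ n) [NeZero n] :
    let w : List (Fin 4) :=
      1 :: (List.replicate (n - 2) (List.replicate (n - 2) 0 ++ [2])).flatten
    shortestSync (deltaAd n) = n ^ 2 - 3 * n + 3 ∧
    w.length = n ^ 2 - 3 * n + 3 ∧ IsSyncWord (deltaAd n) w := by
  intro w
  have hsync : IsSyncWord (deltaAd n) w := ⟨2, fun q => AminusdProof.sync_word hn q⟩
  have hlen : w.length = n ^ 2 - 3 * n + 3 := AminusdProof.word_len hn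
  refine ⟨?_, hlen, hsync⟩
  apply le_antisymm
  · exact Nat.sInf_le ⟨w, hsync, hlen⟩
  · apply le_csInf
    · exact ⟨n ^ 2 - 3 * n + 3, w, hsync, hlen⟩
    rintro L' ⟨w', hw', rfl⟩
    rcases eq_or_lt_of_le hn with h3 | h4
    · subst h3
      have := AminusdProof.lower_bound3 w' hw'
      norm_num
      omega
    · exact AminusdProof.lower_bound (by omega) w' hw'
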